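/- Let K ⊆ ℝᵐ be a smooth cone, A : ℝⁿ → ℝᵐ a linear map and b ∈ ℝᵐ, and assume the set S = {x ∈ ℝⁿ : Ax + b ∈ K} is nonempty. If the range of A meets the interior of K, i.e. Im A ∩ int K ≠ ∅, then the inclusion Ax + b ∈ K has a global error bound: there exists α > 0 such that dist(x, S) ≤ α·dist(Ax + b, K) for all x ∈ ℝⁿ. -/
import Mathlib


open scoped RealInnerProductSpace

noncomputable section

variable {X Y : Type*} [NormedAddCommGroup X] [InnerProductSpace ℝ X]
  [NormedAddCommGroup Y] [InnerProductSpace ℝ Y]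

/-- A cone: closed under nonnegative scalar multiplication. -/
def IsCone (C : Set X) : Prop := ∀ x ∈ C, ∀ t : ℝ, 0 ≤ t → t • x ∈ C

/-- A regular cone: a closed, convex, pointed cone with nonempty interior. -/
def IsRegularCone (C : Set X) : Prop :=
  IsCone C ∧ IsClosed C ∧ Convex ℝ C ∧ C ∩ (-C) = {0} ∧ (interior C).Nonempty

/-- The polar cone of `C`. -/
def polarCone (C : Set X) : Set X := {y | ∀ x ∈ C, ⟪x, y⟫ ≤ 0}

/-- The normal cone of a convex set `D` at a point `xbar`. -/
def normalCone (D : Set X) (xbar : X) : Set X := {y | ∀ x ∈ D, ⟪y, x - xbar⟫ ≤ 0}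

/-- `F` is a face of the convex set `C`. -/
def IsFaceOf (C F : Set X) : Prop :=
  F ⊆ C ∧ Convex ℝ F ∧ ∀ x ∈ C, ∀ y ∈ C, ∀ t : ℝ, 0 < t → t < 1 →
    (1 - t) • x + t • y ∈ F → x ∈ F ∧ y ∈ F

/-- The dimension of a set: the dimension of its affine hull. -/
def setDim (F : Set X) : ℕ := Module.finrank ℝ (affineSpan ℝ F).direction

/-- A strictly convex cone: a regular cone every proper nonzero face of which has
dimension one. -/
def IsStrictlyConvexCone (C : Set X) : Prop :=
  IsRegularCone C ∧ ∀ F : Set X, IsFaceOf C F → F ≠ C → F ≠ {0} → setDim F = 1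

/-- The ray generated by `x`. -/
def Ray (x : X) : Set X := {y | ∃ t : ℝ, 0 ≤ t ∧ y = t • x}

/-- `S` is a ray: generated by a nonzero vector. -/
def IsRay (S : Set X) : Prop := ∃ x : X, x ≠ 0 ∧ S = Ray x

/-- An extreme ray of `C`: a ray contained in `C` that is a face of `C`. -/
def IsExtremeRay (C S : Set X) : Prop := IsRay S ∧ S ⊆ C ∧ IsFaceOf C S

/-- A smooth cone: a regular cone such that every boundary point lies on an extreme ray
and the normal cone at every nonzero point of any extreme ray has dimension one. -/
def IsSmoothCone (C : Set X) : Prop :=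
  IsRegularCone C ∧
  (∀ x ∈ frontier C, ∃ S : Set X, IsExtremeRay C S ∧ x ∈ S) ∧
  (∀ S : Set X, IsExtremeRay C S → ∀ x ∈ S, x ≠ 0 → setDim (normalCone C x) = 1)


theorem global_error_bound_of_range_meets_interior {n m : ℕ}
    (K : Set (EuclideanSpace ℝ (Fin m))) (hK : IsSmoothCone K)
    (A : EuclideanSpace ℝ (Fin n) →L[ℝ] EuclideanSpace ℝ (Fin m))
    (b : EuclideanSpace ℝ (Fin m))
    (S : Set (EuclideanSpace ℝ (Fin n))) (hS : S = {x | A x + b ∈ K}) (hSne : S.Nonempty)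
    (hint : (Set.range A ∩ interior K).Nonempty) :
    ∃ α : ℝ, 0 < α ∧ ∀ x, Metric.infDist x S ≤ α * Metric.infDist (A x + b) K := by
  obtain ⟨⟨hcone, hclosed, hconv, -, -⟩, -, -⟩ := hK
  obtain ⟨v, ⟨u, hu⟩, hvint⟩ := hint
  have hKne : K.Nonempty := ⟨v, interior_subset hvint⟩
  have hSne' : Nonempty S := hSne.to_subtype
  have hadd : ∀ a ∈ K, ∀ c ∈ K, a + c ∈ K := by
    intro a ha c hc
    have h2 : (2:ℝ) • ((1/2 : ℝ) • a + (1/2:ℝ) • c) ∈ K :=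
      hcone _ (hconv ha hc (by norm_num) (by norm_num) (by norm_num)) 2 (by norm_num)
    have heq : (2:ℝ) • ((1/2 : ℝ) • a + (1/2:ℝ) • c) = a + c := by module
    rwa [heq] at h2
  obtain ⟨ε, hε, hball⟩ := Metric.isOpen_iff.mp isOpen_interior v hvint
  set r := ε/2 with hr
  have hrpos : 0 < r := by positivity
  have hcb : ∀ w : EuclideanSpace ℝ (Fin m), ‖w‖ ≤ r → v + w ∈ K := by
    intro w hw
    refine interior_subset (hball ?_)
    rw [Metric.mem_ball, dist_eq_norm]
    have : v + w - v = w := by abel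
    rw [this]
    linarith
  refine ⟨‖u‖ / r + 1, by positivity, fun x => ?_⟩
  set d := Metric.infDist (A x + b) K with hd
  have hd0 : 0 ≤ d := Metric.infDist_nonneg
  obtain ⟨k, hk, hdk⟩ := hclosed.exists_infDist_eq_dist hKne (A x + b)
  rcases eq_or_lt_of_le hd0 with hdz | hdp
  · -- residual is zero, so x ∈ S
    have hxK : A x + b ∈ K := (hclosed.mem_iff_infDist_zero hKne).mpr hdz.symm
    have hxS : x ∈ S := by rw [hS]; exact hxK
    rw [Metric.infDist_zero_of_mem hxS]
    positivity
  · set t := d / r with ht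
    have htpos : 0 < t := div_pos hdp hrpos
    have h1 : v + t⁻¹ • (A x + b - k) ∈ K := by
      apply hcb
      rw [norm_smul]
      have hnk : ‖A x + b - k‖ = d := by rw [← dist_eq_norm, ← hdk]
      rw [hnk, norm_inv, Real.norm_eq_abs, abs_of_pos htpos, ht]
      rw [show (d / r)⁻¹ * d = r by field_simp]
    have h2 : t • (v + t⁻¹ • (A x + b - k)) ∈ K := hcone _ h1 t htpos.le
    have h3 : k + t • (v + t⁻¹ • (A x + b - k)) ∈ K := hadd _ hk _ h2
    have heq : A (x + t • u) + b = k + t • (v + t⁻¹ • (A x + b - k)) := by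
      rw [map_add, map_smul, hu, smul_add, smul_smul, mul_inv_cancel₀ htpos.ne', one_smul]
      abel
    have hmem : x + t • u ∈ S := by rw [hS]; rw [Set.mem_setOf_eq, heq]; exact h3
    calc Metric.infDist x S ≤ dist x (x + t • u) := Metric.infDist_le_dist_of_mem hmem
      _ = t * ‖u‖ := by
          rw [dist_eq_norm]
          have : x - (x + t • u) = -(t • u) := by abel
          rw [this, norm_neg, norm_smul, Real.norm_eq_abs, abs_of_pos htpos]
      _ = (‖u‖ / r) * d := by rw [ht]; ring
      _ ≤ (‖u‖ / r + 1) * d := by nlinarith [norm_nonneg u, hrpos, div_nonneg (norm_nonneg u) hrpos.le]
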